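/- The exponential mechanism is ε-differentially private: Let ℋ be a finite nonempty set of objects, let s : ℕ^𝒳 × ℋ → ℝ be a score function with finite global sensitivity Δs = sup over h ∈ ℋ and neighboring databases x, y of |s(x,h) − s(y,h)| > 0, and let ε > 0. The exponential mechanism M_E, which on input database x outputs each h ∈ ℋ with probability proportional to exp(ε · s(x,h) / (2Δs)), is ε-differentially private. -/
import Mathlib


open MeasureTheory

/-- The ℓ1 distance `‖x - y‖₁` between databases `x y : 𝒳 →₀ ℕ`. -/
def dbDist {𝒳 : Type*} [DecidableEq 𝒳] (x y : 𝒳 →₀ ℕ) : ℕ :=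
  (x.support ∪ y.support).sum fun a => ((x a : ℤ) - (y a : ℤ)).natAbs

/-- Databases `x` and `y` are neighboring if `‖x - y‖₁ ≤ 1`. -/
def Neighboring {𝒳 : Type*} [DecidableEq 𝒳] (x y : 𝒳 →₀ ℕ) : Prop :=
  dbDist x y ≤ 1

/-- A mechanism `M` is `(ε, δ)`-differentially private if for all measurable sets `S` and all
neighboring databases `x, y`, `M x S ≤ e^ε * M y S + δ`. -/
def IsDP {𝒳 : Type*} [DecidableEq 𝒳] {Ω : Type*} [MeasurableSpace Ω]
    (M : (𝒳 →₀ ℕ) → Measure Ω) (ε δ : ℝ) : Prop :=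
  ∀ x y : 𝒳 →₀ ℕ, Neighboring x y → ∀ S : Set Ω, MeasurableSet S →
    M x S ≤ ENNReal.ofReal (Real.exp ε) * M y S + ENNReal.ofReal δ

/-- The exponential mechanism over a finite set of objects `H` with score function `s`,
privacy parameter `ε` and score sensitivity `Δs`: on input database `x` it outputs each
`h : H` with probability proportional to `exp (ε * s x h / (2 Δs))`. -/
noncomputable def exponentialMechanism {𝒳 : Type*} {H : Type*} [Fintype H]
    [MeasurableSpace H] (s : (𝒳 →₀ ℕ) → H → ℝ) (ε Δs : ℝ) :
    (𝒳 →₀ ℕ) → Measure H :=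
  fun x => ∑ h : H,
    (ENNReal.ofReal (Real.exp (ε * s x h / (2 * Δs)) /
      ∑ h' : H, Real.exp (ε * s x h' / (2 * Δs)))) • Measure.dirac h

/-- **The exponential mechanism is `ε`-differentially private.** Let `H` be a finite
nonempty set of objects and `s` a score function whose global sensitivity over neighboring
databases is at most `Δs > 0`, and let `ε > 0`. Then the exponential mechanism, which
outputs `h` with probability proportional to `exp (ε s(x,h) / (2 Δs))`, is
`ε`-differentially private (i.e. `(ε, 0)`-DP). -/
theorem exponentialMechanism_isDP {𝒳 : Type*} [DecidableEq 𝒳]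
    {H : Type*} [Fintype H] [Nonempty H] [MeasurableSpace H] [MeasurableSingletonClass H]
    (s : (𝒳 →₀ ℕ) → H → ℝ) (ε Δs : ℝ) (hε : 0 < ε) (hΔs : 0 < Δs)
    (hsens : ∀ (h : H) (x y : 𝒳 →₀ ℕ), Neighboring x y → |s x h - s y h| ≤ Δs) :
    IsDP (exponentialMechanism s ε Δs) ε 0 := by
  intro x y hxy S hS
  have hxy' : Neighboring y x := by
    have hd : dbDist y x = dbDist x y := by
      unfold dbDist
      rw [Finset.union_comm]
      exact Finset.sum_congr rfl fun a _ => by rw [← Int.natAbs_neg, neg_sub]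
    unfold Neighboring at hxy ⊢
    rw [hd]; exact hxy
  set f : (𝒳 →₀ ℕ) → H → ℝ := fun z h => Real.exp (ε * s z h / (2 * Δs)) with hf
  have step : ∀ (u v : 𝒳 →₀ ℕ), Neighboring u v → ∀ h : H,
      f u h ≤ Real.exp (ε / 2) * f v h := by
    intro u v huv h
    rw [hf, ← Real.exp_add]
    apply Real.exp_le_exp.mpr
    have h1 : s u h - s v h ≤ Δs := (abs_le.mp (hsens h u v huv)).2
    have key : ε * s u h / (2 * Δs) - ε * s v h / (2 * Δs) ≤ ε / 2 := by
      rw [div_sub_div_same, ← mul_sub, div_le_iff₀ (by positivity : (0:ℝ) < 2 * Δs)]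
      calc ε * (s u h - s v h) ≤ ε * Δs := mul_le_mul_of_nonneg_left h1 hε.le
        _ = ε / 2 * (2 * Δs) := by ring
    linarith
  have hZx : 0 < ∑ h' : H, f x h' :=
    Finset.sum_pos (fun _ _ => Real.exp_pos _) Finset.univ_nonempty
  have hZy : 0 < ∑ h' : H, f y h' :=
    Finset.sum_pos (fun _ _ => Real.exp_pos _) Finset.univ_nonempty
  have hZ : (∑ h' : H, f y h') ≤ Real.exp (ε / 2) * ∑ h' : H, f x h' := by
    rw [Finset.mul_sum]
    exact Finset.sum_le_sum fun h _ => step y x hxy' h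
  have key : ∀ h : H, f x h / (∑ h' : H, f x h') ≤
      Real.exp ε * (f y h / (∑ h' : H, f y h')) := by
    intro h
    rw [← mul_div_assoc, div_le_div_iff₀ hZx hZy]
    calc f x h * ∑ h' : H, f y h'
        ≤ (Real.exp (ε / 2) * f y h) * (Real.exp (ε / 2) * ∑ h' : H, f x h') :=
          mul_le_mul (step x y hxy h) hZ hZy.le (by positivity)
      _ = (Real.exp (ε / 2) * Real.exp (ε / 2)) * f y h * ∑ h' : H, f x h' := by ring
      _ = Real.exp ε * f y h * ∑ h' : H, f x h' := by
          rw [← Real.exp_add]; norm_num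
  unfold exponentialMechanism
  rw [Measure.finset_sum_apply, Measure.finset_sum_apply]
  simp only [Measure.smul_apply, smul_eq_mul]
  rw [ENNReal.ofReal_zero, add_zero, Finset.mul_sum]
  apply Finset.sum_le_sum
  intro h _
  rw [← mul_assoc, ← ENNReal.ofReal_mul (Real.exp_nonneg ε)]
  exact mul_le_mul_left (ENNReal.ofReal_le_ofReal (key h)) _
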